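/- Let w be a permutation of {1,...,n} that is a minimal-length coset representative for S_n/(S_{n−i} × S_i), i.e. w is strictly increasing on {1,...,n−i} and strictly increasing on {n−i+1,...,n}. Let w' be another such minimal-length representative. Then the following are equivalent: (1) w' ≤ w in the Bruhat order on S_n; (2) w'(k) ≤ w(k) for all k = 1,...,n−i; (3) w'(k) ≥ w(k) for all k = n−i+1,...,n. -/

import Mathlib

/-- The length of a permutation: its number of inversions. -/
def invLen {n : ℕ} (w : Equiv.Perm (Fin n)) : ℕ :=
  (Finset.univ.filter (fun p : Fin n × Fin n => p.1 < p.2 ∧ w p.2 < w p.1)).card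

/-- One step of the Bruhat order: `w'` is obtained from `w` by multiplication by a
transposition which decreases the length. -/
def BruhatStep {n : ℕ} (w w' : Equiv.Perm (Fin n)) : Prop :=
  ∃ i j : Fin n, i ≠ j ∧ w' = w * Equiv.swap i j ∧ invLen w' < invLen w

/-- Bruhat order: `w' ≤_B w` iff `w'` is obtained from `w` by a sequence of
multiplications by transpositions, each decreasing the length. -/
def BruhatLE {n : ℕ} (w' w : Equiv.Perm (Fin n)) : Prop :=
  Relation.ReflTransGen BruhatStep w w'

/-- `w` is a minimal-length coset representative for `S_n/(S_{n-i} × S_i)`: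
`w` is strictly increasing on the first `n - i` positions and strictly
increasing on the last `i` positions (positions are `0`-based). -/
def MinCosetRep {n : ℕ} (i : ℕ) (w : Equiv.Perm (Fin n)) : Prop :=
  (∀ k l : Fin n, (k : ℕ) < (l : ℕ) → (l : ℕ) < n - i → w k < w l) ∧
  (∀ k l : Fin n, (k : ℕ) < (l : ℕ) → n - i ≤ (k : ℕ) → w k < w l)

open Finset
def rk {n : ℕ} (w : Equiv.Perm (Fin n)) (k l : Fin n) : ℕ :=
  (univ.filter (fun a => a ≤ k ∧ l ≤ w a)).card

lemma rk_mul_swap_le {n : ℕ} (w : Equiv.Perm (Fin n)) {i j : Fin n}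
    (hij : i < j) (hv : w j < w i) (k l : Fin n) :
    rk (w * Equiv.swap i j) k l ≤ rk w k l := by
  classical
  apply Finset.card_le_card_of_injOn (fun a => if j ≤ k then Equiv.swap i j a else a)
  · intro a ha
    rw [mem_coe, mem_filter] at ha ⊢
    simp only [mem_filter, mem_univ, true_and, Equiv.Perm.mul_apply] at ha ⊢
    by_cases hjk : j ≤ k
    · simp only [if_pos hjk]
      refine ⟨?_, ha.2⟩
      rw [Equiv.swap_apply_def]
      split_ifs with h1 h2
      · exact hjk
      · exact le_trans hij.le hjk
      · exact ha.1
    · simp only [if_neg hjk]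
      refine ⟨ha.1, ?_⟩
      push_neg at hjk
      have haj : a ≠ j := by
        intro h; subst h; exact absurd ha.1 (not_le.mpr hjk)
      by_cases hai : a = i
      · subst hai
        rw [Equiv.swap_apply_left] at ha
        exact le_of_lt (lt_of_le_of_lt ha.2 hv)
      · rw [Equiv.swap_apply_of_ne_of_ne hai haj] at ha
        exact ha.2
  · intro a _ b _ hab
    by_cases hjk : j ≤ k
    · simp only [if_pos hjk] at hab
      exact (Equiv.swap i j).injective hab
    · simpa [if_neg hjk] using hab

lemma invLen_mul_swap_lt {n : ℕ} (w : Equiv.Perm (Fin n)) {i j : Fin n}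
    (hij : i < j) (hv : w j < w i) :
    invLen (w * Equiv.swap i j) < invLen w := by
  classical
  set σ := Equiv.swap i j with hσ
  set P : Finset (Fin n × Fin n) :=
    univ.filter (fun p : Fin n × Fin n => p.1 < p.2 ∧ w p.2 < w p.1) with hP
  have hPmem : (i, j) ∈ P := by simp [hP, hij, hv]
  have hcard : invLen (w * σ) ≤ (P.erase (i, j)).card := by
    apply Finset.card_le_card_of_injOn
      (fun p => if σ p.1 < σ p.2 then (σ p.1, σ p.2) else p)
    · intro p hp
      rw [mem_coe] at hp ⊢
      beta_reduce
      rw [mem_filter] at hp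
      simp only [mem_filter, mem_univ, true_and, Equiv.Perm.mul_apply] at hp
      obtain ⟨h12, hw⟩ := hp
      by_cases hf : σ p.1 < σ p.2
      · rw [if_pos hf]
        refine mem_erase.mpr ⟨?_, by simp [hP, hf, hw]⟩
        intro he
        rw [Prod.ext_iff] at he
        obtain ⟨e1, e2⟩ := he
        dsimp only at e1 e2
        have h1 : p.1 = j := by
          apply σ.injective; rw [e1]; simp [hσ]
        have h2 : p.2 = i := by
          apply σ.injective; rw [e2]; simp [hσ]
        rw [h1, h2] at h12
        exact absurd h12 (not_lt.mpr hij.le)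
      · rw [if_neg hf]
        have hne : σ p.2 ≠ σ p.1 := fun h => h12.ne' (σ.injective h)
        have hf' : σ p.2 < σ p.1 := lt_of_le_of_ne (not_lt.mp hf) hne
        refine mem_erase.mpr ⟨?_, ?_⟩
        · intro he
          rw [he] at hw
          simp only [hσ, Equiv.swap_apply_left, Equiv.swap_apply_right] at hw
          exact absurd hw (not_lt.mpr hv.le)
        · simp only [hP, mem_filter, mem_univ, true_and]
          refine ⟨h12, ?_⟩
          by_cases h1i : p.1 = i
          · by_cases h2j : p.2 = j
            · rw [h1i, h2j] at hw
              simp only [hσ, Equiv.swap_apply_left, Equiv.swap_apply_right] at hw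
              exact absurd hw (not_lt.mpr hv.le)
            · have h2i : p.2 ≠ i := by
                intro h; rw [h1i, h] at h12; exact lt_irrefl _ h12
              rw [h1i] at hw ⊢
              rw [hσ, Equiv.swap_apply_left, Equiv.swap_apply_of_ne_of_ne h2i h2j] at hw
              exact lt_trans hw hv
          · by_cases h1j : p.1 = j
            · have h2i : p.2 ≠ i := by
                intro h; rw [h1j, h] at h12; exact absurd (lt_trans hij h12) (lt_irrefl _)
              have h2j : p.2 ≠ j := by
                intro h; rw [h1j, h] at h12; exact lt_irrefl _ h12
              rw [hσ, h1j, Equiv.swap_apply_right,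
                  Equiv.swap_apply_of_ne_of_ne h2i h2j] at hf'
              have hcon : p.2 < p.1 := by rw [h1j]; exact hf'.trans hij
              exact absurd h12 (not_lt.mpr hcon.le)
            · by_cases h2i : p.2 = i
              · rw [hσ, h2i, Equiv.swap_apply_left,
                    Equiv.swap_apply_of_ne_of_ne h1i h1j] at hf'
                have hcon : p.1 < j := lt_trans (h2i ▸ h12) hij
                exact absurd hf' (not_lt.mpr hcon.le)
              · by_cases h2j : p.2 = j
                · rw [h2j] at hw ⊢
                  rw [hσ, Equiv.swap_apply_right, Equiv.swap_apply_of_ne_of_ne h1i h1j] at hw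
                  exact lt_trans hv hw
                · rw [hσ, Equiv.swap_apply_of_ne_of_ne h1i h1j,
                      Equiv.swap_apply_of_ne_of_ne h2i h2j] at hf'
                  exact absurd h12 (not_lt.mpr hf'.le)
    · intro p hp q hq h
      simp only [mem_coe, mem_filter, mem_univ, true_and] at hp hq
      by_cases hp' : σ p.1 < σ p.2 <;> by_cases hq' : σ q.1 < σ q.2
      · simp only [if_pos hp', if_pos hq', Prod.ext_iff] at h
        exact Prod.ext (σ.injective h.1) (σ.injective h.2)
      · simp only [if_pos hp', if_neg hq'] at h
        exfalso
        have e1 : σ q.1 = p.1 := by rw [← h]; simp [hσ]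
        have e2 : σ q.2 = p.2 := by rw [← h]; simp [hσ]
        rw [e1, e2] at hq'
        exact hq' hp.1
      · simp only [if_neg hp', if_pos hq'] at h
        exfalso
        have e1 : σ p.1 = q.1 := by rw [h]; simp [hσ]
        have e2 : σ p.2 = q.2 := by rw [h]; simp [hσ]
        rw [e1, e2] at hp'
        exact hp' hq.1
      · simpa [if_neg hp', if_neg hq'] using h
  calc invLen (w * σ) ≤ (P.erase (i, j)).card := hcard
    _ < P.card := card_erase_lt_of_mem hPmem

lemma bruhatStep_rk_le {n : ℕ} {w w' : Equiv.Perm (Fin n)}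
    (h : BruhatStep w w') (k l : Fin n) : rk w' k l ≤ rk w k l := by
  obtain ⟨i, j, hne, hw', hlen⟩ := h
  rcases lt_trichotomy i j with hij | hij | hij
  · by_cases hv : w j < w i
    · rw [hw']; exact rk_mul_swap_le w hij hv k l
    · exfalso
      have hvv : w i < w j :=
        lt_of_le_of_ne (not_lt.mp hv) (fun h => hne ((w.injective h)))
      have hww : w = w' * Equiv.swap i j := by
        rw [hw', mul_assoc, Equiv.swap_mul_self, mul_one]
      have h1 : w' j < w' i := by
        rw [hw']; simp [Equiv.Perm.mul_apply, Equiv.swap_apply_left,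
          Equiv.swap_apply_right]; exact hvv
      have := invLen_mul_swap_lt w' hij h1
      rw [← hww] at this
      omega
  · exact absurd hij hne
  · by_cases hv : w i < w j
    · rw [hw', Equiv.swap_comm]; exact rk_mul_swap_le w hij hv k l
    · exfalso
      have hvv : w j < w i :=
        lt_of_le_of_ne (not_lt.mp hv) (fun h => hne ((w.injective h)).symm)
      have hww : w = w' * Equiv.swap i j := by
        rw [hw', mul_assoc, Equiv.swap_mul_self, mul_one]
      have h1 : w' i < w' j := by
        rw [hw']; simp [Equiv.Perm.mul_apply, Equiv.swap_apply_left,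
          Equiv.swap_apply_right]; exact hvv
      have := invLen_mul_swap_lt w' hij h1
      rw [Equiv.swap_comm, ← hww] at this
      omega

lemma bruhatLE_rk_le {n : ℕ} {w w' : Equiv.Perm (Fin n)}
    (h : BruhatLE w' w) (k l : Fin n) : rk w' k l ≤ rk w k l := by
  induction h with
  | refl => exact le_refl _
  | tail _ hstep ih => exact le_trans (bruhatStep_rk_le hstep k l) ih

lemma bruhatLE_imp_firstBlock {n : ℕ} {i : ℕ} {w w' : Equiv.Perm (Fin n)}
    (hw : MinCosetRep i w) (hw' : MinCosetRep i w') (h : BruhatLE w' w) :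
    ∀ k : Fin n, (k : ℕ) < n - i → w' k ≤ w k := by
  intro k hk
  have h1 : 1 ≤ rk w' k (w' k) := by
    rw [rk]
    refine card_pos.mpr ⟨k, ?_⟩
    simp
  have h2 : 1 ≤ rk w k (w' k) := le_trans h1 (bruhatLE_rk_le h k (w' k))
  rw [rk] at h2
  obtain ⟨a, ha⟩ := card_pos.mp h2
  simp only [mem_filter, mem_univ, true_and] at ha
  obtain ⟨hak, hwa⟩ := ha
  rcases eq_or_lt_of_le hak with heq | hlt
  · rw [heq] at hwa; exact hwa
  · exact le_of_lt (lt_of_le_of_lt hwa (hw.1 a k hlt hk))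

lemma card_filter_le_val {n : ℕ} (w : Equiv.Perm (Fin n)) (v : Fin n) :
    (univ.filter fun a => w a ≤ v).card = (univ.filter fun u => u ≤ v).card := by
  apply Finset.card_bij' (fun a _ => w a) (fun u _ => w.symm u) <;> simp

lemma card_filter_ge_val {n : ℕ} (w : Equiv.Perm (Fin n)) (v : Fin n) :
    (univ.filter fun a => v ≤ w a).card = (univ.filter fun u => v ≤ u).card := by
  apply Finset.card_bij' (fun a _ => w a) (fun u _ => w.symm u) <;> simp

lemma block1_imp_block2 {n : ℕ} {i : ℕ} {w w' : Equiv.Perm (Fin n)}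
    (hw : MinCosetRep i w) (hw' : MinCosetRep i w')
    (h2 : ∀ k : Fin n, (k : ℕ) < n - i → w' k ≤ w k) :
    ∀ k : Fin n, n - i ≤ (k : ℕ) → w k ≤ w' k := by
  classical
  intro k hk
  by_contra hcon
  push_neg at hcon
  set v := w k with hv
  set S : Finset (Fin n) := univ.filter (fun a => v ≤ w a) with hS
  set S' : Finset (Fin n) := univ.filter (fun a => v ≤ w' a) with hS'
  have hSS : S.card = S'.card := by
    rw [hS, hS', card_filter_ge_val, card_filter_ge_val]
  have hsplit : (S.filter (fun a : Fin n => (a : ℕ) < n - i)).card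
      + (S.filter (fun a : Fin n => ¬ (a : ℕ) < n - i)).card = S.card :=
    Finset.card_filter_add_card_filter_not _
  have hsplit' : (S'.filter (fun a : Fin n => (a : ℕ) < n - i)).card
      + (S'.filter (fun a : Fin n => ¬ (a : ℕ) < n - i)).card = S'.card :=
    Finset.card_filter_add_card_filter_not _
  have hA : (S'.filter (fun a : Fin n => (a : ℕ) < n - i)).card
      ≤ (S.filter (fun a : Fin n => (a : ℕ) < n - i)).card := by
    apply card_le_card
    intro a ha
    simp only [hS, hS', mem_filter, mem_univ, true_and] at ha ⊢
    exact ⟨le_trans ha.1 (h2 a ha.2), ha.2⟩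
  have hB : (Finset.Ici k).card ≤ (S.filter (fun a : Fin n => ¬ (a : ℕ) < n - i)).card := by
    apply card_le_card
    intro a ha
    rw [mem_Ici] at ha
    simp only [hS, mem_filter, mem_univ, true_and, not_lt]
    have hka : (k : ℕ) ≤ (a : ℕ) := ha
    refine ⟨?_, le_trans hk hka⟩
    rcases eq_or_lt_of_le ha with heq | hlt
    · rw [← heq]
    · exact le_of_lt (hw.2 k a hlt hk)
  have hB' : (S'.filter (fun a : Fin n => ¬ (a : ℕ) < n - i)).card ≤ (Finset.Ioi k).card := by
    apply card_le_card
    intro a ha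
    simp only [hS', mem_filter, mem_univ, true_and, not_lt] at ha
    rw [mem_Ioi]
    rcases lt_trichotomy a k with h | h | h
    · exact absurd (lt_of_lt_of_le (hw'.2 a k h ha.2) (le_trans hcon.le ha.1))
        (lt_irrefl _)
    · rw [h] at ha
      exact absurd (lt_of_le_of_lt ha.1 hcon) (lt_irrefl _)
    · exact h
  have hIci : (Finset.Ici k).card = (Finset.Ioi k).card + 1 := by
    rw [← Finset.Ioi_insert k, card_insert_of_notMem (by simp)]
  omega

lemma block2_imp_block1 {n : ℕ} {i : ℕ} {w w' : Equiv.Perm (Fin n)}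
    (hw : MinCosetRep i w) (hw' : MinCosetRep i w')
    (h3 : ∀ k : Fin n, n - i ≤ (k : ℕ) → w k ≤ w' k) :
    ∀ k : Fin n, (k : ℕ) < n - i → w' k ≤ w k := by
  classical
  intro k hk
  by_contra hcon
  push_neg at hcon
  set v := w k with hv
  set S : Finset (Fin n) := univ.filter (fun a => w a ≤ v) with hS
  set S' : Finset (Fin n) := univ.filter (fun a => w' a ≤ v) with hS'
  have hSS : S.card = S'.card := by
    rw [hS, hS', card_filter_le_val, card_filter_le_val]
  have hsplit : (S.filter (fun a : Fin n => (a : ℕ) < n - i)).card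
      + (S.filter (fun a : Fin n => ¬ (a : ℕ) < n - i)).card = S.card :=
    Finset.card_filter_add_card_filter_not _
  have hsplit' : (S'.filter (fun a : Fin n => (a : ℕ) < n - i)).card
      + (S'.filter (fun a : Fin n => ¬ (a : ℕ) < n - i)).card = S'.card :=
    Finset.card_filter_add_card_filter_not _
  have hB : (S'.filter (fun a : Fin n => ¬ (a : ℕ) < n - i)).card
      ≤ (S.filter (fun a : Fin n => ¬ (a : ℕ) < n - i)).card := by
    apply card_le_card
    intro a ha
    simp only [hS, hS', mem_filter, mem_univ, true_and, not_lt] at ha ⊢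
    exact ⟨le_trans (h3 a ha.2) ha.1, ha.2⟩
  have hA : (Finset.Iic k).card ≤ (S.filter (fun a : Fin n => (a : ℕ) < n - i)).card := by
    apply card_le_card
    intro a ha
    rw [mem_Iic] at ha
    simp only [hS, mem_filter, mem_univ, true_and]
    have hka : (a : ℕ) ≤ (k : ℕ) := ha
    refine ⟨?_, lt_of_le_of_lt hka hk⟩
    rcases eq_or_lt_of_le ha with heq | hlt
    · rw [heq]
    · exact le_of_lt (hw.1 a k hlt hk)
  have hA' : (S'.filter (fun a : Fin n => (a : ℕ) < n - i)).card ≤ (Finset.Iio k).card := by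
    apply card_le_card
    intro a ha
    simp only [hS', mem_filter, mem_univ, true_and] at ha
    rw [mem_Iio]
    rcases lt_trichotomy a k with h | h | h
    · exact h
    · rw [h] at ha
      exact absurd (lt_of_le_of_lt ha.1 hcon) (lt_irrefl _)
    · exact absurd (lt_of_le_of_lt ha.1 hcon) (not_lt.mpr (hw'.1 k a h ha.2).le)
  have hIic : (Finset.Iic k).card = (Finset.Iio k).card + 1 := by
    rw [← Finset.Iio_insert k, card_insert_of_notMem (by simp)]
  omega

lemma firstBlock_imp_bruhatLE_aux {n : ℕ} {i : ℕ} {w' : Equiv.Perm (Fin n)}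
    (hw' : MinCosetRep i w') :
    ∀ N : ℕ, ∀ w : Equiv.Perm (Fin n), invLen w < N → MinCosetRep i w →
      (∀ k : Fin n, (k : ℕ) < n - i → w' k ≤ w k) → BruhatLE w' w := by
  classical
  intro N
  induction N with
  | zero => intro w h; exact absurd h (Nat.not_lt_zero _)
  | succ N ih =>
    intro w hlen hw h2
    by_cases heq : ∀ k : Fin n, (k : ℕ) < n - i → w k = w' k
    · have h2' : ∀ k : Fin n, (k : ℕ) < n - i → w k ≤ w' k :=
        fun k hk => (heq k hk).le
      have hb2 : ∀ k : Fin n, n - i ≤ (k : ℕ) → w k ≤ w' k :=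
        block1_imp_block2 hw hw' h2
      have hb2' : ∀ k : Fin n, n - i ≤ (k : ℕ) → w' k ≤ w k :=
        block1_imp_block2 hw' hw h2'
      have : w = w' := by
        apply Equiv.ext
        intro k
        rcases lt_or_ge (k : ℕ) (n - i) with hk | hk
        · exact heq k hk
        · exact le_antisymm (hb2 k hk) (hb2' k hk)
      rw [this]
      exact Relation.ReflTransGen.refl
    · push_neg at heq
      obtain ⟨k0, hk0, hne0⟩ := heq
      set K : Finset (Fin n) :=
        univ.filter (fun a : Fin n => (a : ℕ) < n - i ∧ w' a < w a) with hK
      have hKne : K.Nonempty :=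
        ⟨k0, by simp [hK, hk0, lt_of_le_of_ne (h2 k0 hk0) (fun h => hne0 h.symm)]⟩
      set k := K.min' hKne with hkdef
      have hkmem : k ∈ K := K.min'_mem hKne
      rw [hK, mem_filter] at hkmem
      obtain ⟨-, hk1, hk2⟩ := hkmem
      have hmin : ∀ a : Fin n, a < k → w a = w' a := by
        intro a ha
        have hanotin : a ∉ K := fun hmem => absurd (K.min'_le a hmem) (not_le.mpr ha)
        have ha1 : (a : ℕ) < n - i := lt_trans (Fin.lt_def.mp ha) hk1
        simp only [hK, mem_filter, mem_univ, true_and, not_and, not_lt] at hanotin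
        exact le_antisymm (hanotin ha1) (h2 a ha1)
      have hnotin : ∀ a : Fin n, (a : ℕ) < n - i → w a ≠ w' k := by
        intro a ha hconeq
        have hak : a < k := by
          have hne : a ≠ k := by
            intro h; rw [h] at hconeq; exact absurd hconeq (ne_of_gt hk2)
          rcases lt_or_gt_of_ne hne with h | h
          · exact h
          · exact absurd (hconeq ▸ hw.1 k a (Fin.lt_def.mp h) ha)
              (not_lt.mpr hk2.le)
        have := hmin a hak
        rw [this] at hconeq
        exact absurd hconeq (ne_of_lt (hw'.1 a k (Fin.lt_def.mp hak) hk1))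
      set V : Finset (Fin n) :=
        univ.filter (fun v : Fin n => v < w k ∧ ∀ a : Fin n, (a : ℕ) < n - i → w a ≠ v)
        with hV
      have hVne : V.Nonempty :=
        ⟨w' k, by simp only [hV, mem_filter, mem_univ, true_and]; exact ⟨hk2, hnotin⟩⟩
      set v := V.max' hVne with hvdef
      have hvmem : v ∈ V := V.max'_mem hVne
      rw [hV, mem_filter] at hvmem
      obtain ⟨-, hvlt, hvno⟩ := hvmem
      have hvge : w' k ≤ v := V.le_max' _
        (by simp only [hV, mem_filter, mem_univ, true_and]; exact ⟨hk2, hnotin⟩)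
      set m := w.symm v with hmdef
      have hwm : w m = v := w.apply_symm_apply v
      have hm2 : n - i ≤ (m : ℕ) := by
        by_contra hcon
        push_neg at hcon
        exact hvno m hcon hwm
      have hkm : k < m := Fin.lt_def.mpr (lt_of_lt_of_le hk1 hm2)
      set w₁ := w * Equiv.swap k m with hw₁def
      have hval1 : w₁ k = v := by
        rw [hw₁def]; simp [Equiv.Perm.mul_apply, Equiv.swap_apply_left, hwm]
      have hval2 : w₁ m = w k := by
        rw [hw₁def]; simp [Equiv.Perm.mul_apply, Equiv.swap_apply_right]
      have hval3 : ∀ a : Fin n, a ≠ k → a ≠ m → w₁ a = w a := by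
        intro a h1 h3
        rw [hw₁def]; simp [Equiv.Perm.mul_apply, Equiv.swap_apply_of_ne_of_ne h1 h3]
      have hstep : BruhatStep w w₁ :=
        ⟨k, m, ne_of_lt hkm, rfl, invLen_mul_swap_lt w hkm (hwm ▸ hvlt)⟩
      have hw₁ : MinCosetRep i w₁ := by
        constructor
        · intro a b hab hb
          have hbm : b ≠ m := by
            intro h; rw [h] at hb; omega
          have ham : a ≠ m := by
            intro h; rw [h] at hab; omega
          by_cases hbk : b = k
          · have hak : a ≠ k := by
              intro h; rw [h, hbk] at hab; omega
            have hak' : a < k := by rw [← hbk]; exact Fin.lt_def.mpr hab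
            rw [hval3 a hak ham, hbk, hval1, hmin a hak']
            exact lt_of_lt_of_le (hw'.1 a k (Fin.lt_def.mp hak') hk1) hvge
          · by_cases hak : a = k
            · rw [hak, hval1, hval3 b hbk hbm]
              exact lt_trans hvlt (hw.1 k b (by rw [← hak]; exact hab) hb)
            · rw [hval3 a hak ham, hval3 b hbk hbm]
              exact hw.1 a b hab hb
        · intro a b hab ha
          have hak : a ≠ k := by
            intro h; rw [h] at ha; omega
          have hbk : b ≠ k := by
            intro h; rw [h] at hab; omega
          by_cases ham : a = m
          · have hbm : b ≠ m := by
              intro h; rw [ham, h] at hab; omega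
            rw [ham, hval2, hval3 b hbk hbm]
            by_contra hcon
            push_neg at hcon
            have hwb : w b ≠ w k := fun h => hbk (w.injective h)
            have hwblt : w b < w k := lt_of_le_of_ne hcon hwb
            have hwbv : v < w b := by
              rw [← hwm, ← ham]
              exact hw.2 a b hab ha
            have hwbV : w b ∈ V := by
              simp only [hV, mem_filter, mem_univ, true_and]
              exact ⟨hwblt, fun a' ha' h => by
                have : (a' : ℕ) < (b : ℕ) := by
                  have := hm2
                  rw [ham] at hab
                  omega
                exact absurd (w.injective h) (fun heq => by rw [heq] at this; omega)⟩
            exact absurd (V.le_max' _ hwbV) (not_le.mpr hwbv)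
          · by_cases hbm : b = m
            · rw [hbm, hval2, hval3 a hak ham]
              exact lt_trans (by rw [← hwm, ← hbm]; exact hw.2 a b hab ha) hvlt
            · rw [hval3 a hak ham, hval3 b hbk hbm]
              exact hw.2 a b hab ha
      have h2₁ : ∀ a : Fin n, (a : ℕ) < n - i → w' a ≤ w₁ a := by
        intro a ha
        have ham : a ≠ m := by intro h; rw [h] at ha; omega
        by_cases hak : a = k
        · rw [hak, hval1]; exact hvge
        · rw [hval3 a hak ham]; exact h2 a ha
      have hlen₁ : invLen w₁ < N := by
        have := hstep.choose_spec
        have hlt : invLen w₁ < invLen w := invLen_mul_swap_lt w hkm (hwm ▸ hvlt)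
        omega
      exact Relation.ReflTransGen.head hstep (ih w₁ hlen₁ hw₁ h2₁)

/-- For minimal coset representatives `w, w'` for `S_n/(S_{n-i} × S_i)`, the
following are equivalent: (1) `w' ≤_B w`; (2) `w'(k) ≤ w(k)` for all positions
`k` in the first block; (3) `w'(k) ≥ w(k)` for all positions `k` in the second
block. -/
theorem bruhat_minCosetRep_criterion {n : ℕ} (i : ℕ) (hi : i ≤ n)
    (w w' : Equiv.Perm (Fin n)) (hw : MinCosetRep i w) (hw' : MinCosetRep i w') :
    (BruhatLE w' w ↔ ∀ k : Fin n, (k : ℕ) < n - i → w' k ≤ w k) ∧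
    (BruhatLE w' w ↔ ∀ k : Fin n, n - i ≤ (k : ℕ) → w k ≤ w' k) := by
  have to2 := bruhatLE_imp_firstBlock hw hw'
  have from2 : (∀ k : Fin n, (k : ℕ) < n - i → w' k ≤ w k) → BruhatLE w' w :=
    fun h => firstBlock_imp_bruhatLE_aux hw' (invLen w + 1) w (Nat.lt_succ_self _) hw h
  refine ⟨⟨to2, from2⟩, ?_, ?_⟩
  · intro h
    exact block1_imp_block2 hw hw' (to2 h)
  · intro h
    exact from2 (block2_imp_block1 hw hw' h)
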